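/- The attainable (ξ,ψ)-region over stochastically increasing copulas satisfies {(ξ(C), ψ(C)) : C a stochastically increasing bivariate copula} = {(x,y) ∈ [0,1]² : x ≤ y ≤ √x}. -/

import Mathlib

open MeasureTheory Set Filter
open scoped Topology Interval

noncomputable section

lemma ae_ne_vol (c : ℝ) : ∀ᵐ t : ℝ, t ≠ c := by
  have h : (volume : Measure ℝ) {c} = 0 := measure_singleton c
  rw [ae_iff]
  simpa using h

/-- interval integrability from boundedness and measurability -/
lemma ii_of_bounded {f : ℝ → ℝ} (hm : Measurable f) {a b M : ℝ} (hab : a ≤ b)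
    (hM : ∀ᵐ t ∂(volume.restrict (Ioc a b)), |f t| ≤ M) :
    IntervalIntegrable f volume a b := by
  rw [intervalIntegrable_iff, uIoc_of_le hab]
  refine ⟨hm.aestronglyMeasurable.restrict, ?_⟩
  apply HasFiniteIntegral.restrict_of_bounded (C := M) (by simp [Real.volume_Ioc])
  simpa [Real.norm_eq_abs] using hM

lemma deriv_eq_of_eventually_affine {f : ℝ → ℝ} {t k m : ℝ}
    (h : ∀ᶠ u in 𝓝 t, f u = k * u + m) : deriv f t = k := by
  have h1 : HasDerivAt (fun u : ℝ => k * u + m) k t := by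
    simpa using ((hasDerivAt_id t).const_mul k).add_const m
  exact (h1.congr_of_eventuallyEq h).deriv

/-- derivative of a monotone 1-Lipschitz function lies in `[0,1]`. -/
lemma deriv_mem_of_monotone_lipschitz {f : ℝ → ℝ} (hm : Monotone f)
    (hl : LipschitzWith 1 f) (t : ℝ) : deriv f t ∈ Icc (0:ℝ) 1 := by
  by_cases hd : DifferentiableAt ℝ f t
  · have H := hd.hasDerivAt
    rw [hasDerivAt_iff_tendsto_slope] at H
    constructor
    · refine ge_of_tendsto H ?_
      filter_upwards [self_mem_nhdsWithin] with x hx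
      have hx' : x ≠ t := hx
      rw [slope_def_field]
      rcases lt_or_gt_of_ne hx' with h | h
      · rw [div_nonneg_iff]
        right
        exact ⟨by simpa using hm h.le, by linarith⟩
      · rw [div_nonneg_iff]
        left
        exact ⟨by simpa using hm h.le, by linarith⟩
    · refine le_of_tendsto H ?_
      filter_upwards [self_mem_nhdsWithin] with x hx
      have hx' : x ≠ t := hx
      have hd : |f x - f t| ≤ |x - t| := by
        have := hl.dist_le_mul x t
        simpa [Real.dist_eq] using this
      calc slope f t x ≤ |slope f t x| := le_abs_self _
        _ ≤ 1 := by
          rw [slope_def_field, abs_div]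
          rw [div_le_one (abs_pos.2 (sub_ne_zero.2 hx'))]
          exact hd
  · simp [deriv_zero_of_not_differentiableAt hd]

/-- averaging limit for Lipschitz functions -/
lemma aux_avg {f : ℝ → ℝ} {K : NNReal} (hl : LipschitzWith K f) (c : ℝ) :
    Tendsto (fun n : ℕ => ((n : ℝ) + 1) * ∫ t in c..(c + ((n : ℝ) + 1)⁻¹), f t)
      atTop (𝓝 (f c)) := by
  have hcont : Continuous f := hl.continuous
  rw [tendsto_iff_norm_sub_tendsto_zero]
  apply squeeze_zero (g := fun n : ℕ => (K : ℝ) * ((n : ℝ) + 1)⁻¹)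
    (fun n => norm_nonneg _)
  · intro n
    set h : ℝ := ((n : ℝ) + 1)⁻¹ with hh
    have hpos : 0 < h := by positivity
    have e3 : ((n : ℝ) + 1) * h = 1 := by rw [hh]; exact mul_inv_cancel₀ (by positivity)
    have e1 : (∫ t in c..(c + h), f t)
        = (∫ t in c..(c + h), (f t - f c)) + (∫ t in c..(c + h), (f c : ℝ)) := by
      rw [← intervalIntegral.integral_add (f := fun t => f t - f c)
        ((hcont.sub continuous_const).intervalIntegrable _ _) intervalIntegrable_const]
      simp
    have e2 : (∫ t in c..(c + h), (f c : ℝ)) = h * f c := by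
      rw [intervalIntegral.integral_const, smul_eq_mul]
      ring_nf
    have key : ((n : ℝ) + 1) * (∫ t in c..(c + h), f t) - f c
        = ((n : ℝ) + 1) * (∫ t in c..(c + h), (f t - f c)) := by
      rw [e1, e2]
      linear_combination (f c) * e3
    have hbound : ‖∫ t in c..(c + h), (f t - f c)‖ ≤ ((K : ℝ) * h) * |c + h - c| := by
      apply intervalIntegral.norm_integral_le_of_norm_le_const
      intro x hx
      rw [uIoc_of_le (by linarith)] at hx
      have hd : dist (f x) (f c) ≤ K * dist x c := hl.dist_le_mul x c
      rw [Real.dist_eq, Real.dist_eq] at hd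
      have hxc : |x - c| ≤ h := by
        rw [abs_le]
        constructor
        · linarith [hx.1.le]
        · linarith [hx.2]
      calc ‖f x - f c‖ = |f x - f c| := rfl
        _ ≤ (K : ℝ) * |x - c| := hd
        _ ≤ (K : ℝ) * h := mul_le_mul_of_nonneg_left hxc K.coe_nonneg
    have habs : |c + h - c| = h := by
      rw [show c + h - c = h by ring]
      exact abs_of_pos hpos
    calc ‖((n : ℝ) + 1) * (∫ t in c..(c + h), f t) - f c‖
        = ((n : ℝ) + 1) * ‖∫ t in c..(c + h), (f t - f c)‖ := by
          rw [key, norm_mul, Real.norm_eq_abs ((n:ℝ)+1), abs_of_pos (by positivity)]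
      _ ≤ ((n : ℝ) + 1) * (((K : ℝ) * h) * h) := by
          rw [habs] at hbound
          exact mul_le_mul_of_nonneg_left hbound (by positivity)
      _ = (K : ℝ) * h := by
          have e4 : ((n : ℝ) + 1) * (((K : ℝ) * h) * h)
              = (K : ℝ) * h * (((n : ℝ) + 1) * h) := by ring
          rw [e4, e3, mul_one]
  · have : Tendsto (fun n : ℕ => ((n : ℝ) + 1)⁻¹) atTop (𝓝 0) := by
      simpa [one_div] using tendsto_one_div_add_atTop_nhds_zero_nat (𝕜 := ℝ)
    simpa using this.const_mul (K : ℝ)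

/-- Fundamental theorem of calculus for Lipschitz functions. -/
lemma integral_deriv_lipschitz {f : ℝ → ℝ} {K : NNReal} (hl : LipschitzWith K f)
    {a b : ℝ} (hab : a ≤ b) : ∫ t in a..b, deriv f t = f b - f a := by
  have hcont : Continuous f := hl.continuous
  set F : ℕ → ℝ → ℝ := fun n t => ((n : ℝ) + 1) * (f (t + ((n : ℝ) + 1)⁻¹) - f t) with hF
  have hFcont : ∀ n, Continuous (F n) := by
    intro n
    exact continuous_const.mul ((hcont.comp (continuous_id.add continuous_const)).sub hcont)
  have hFm : ∀ n, AEStronglyMeasurable (F n) (volume.restrict (Ioc a b)) := fun n =>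
    (hFcont n).aestronglyMeasurable.restrict
  have hbound : ∀ n, ∀ᵐ t ∂(volume.restrict (Ioc a b)), ‖F n t‖ ≤ (K : ℝ) := by
    intro n
    apply ae_of_all
    intro t
    have hpos : (0:ℝ) < ((n : ℝ) + 1)⁻¹ := by positivity
    have : dist (f (t + ((n : ℝ) + 1)⁻¹)) (f t) ≤ K * dist (t + ((n : ℝ) + 1)⁻¹) t :=
      hl.dist_le_mul _ _
    rw [Real.dist_eq, Real.dist_eq] at this
    have e : |t + ((n : ℝ) + 1)⁻¹ - t| = ((n : ℝ) + 1)⁻¹ := by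
      rw [abs_of_pos (by linarith)]; ring
    rw [e] at this
    have : ‖F n t‖ = ((n : ℝ) + 1) * |f (t + ((n : ℝ) + 1)⁻¹) - f t| := by
      rw [hF]; simp only [Real.norm_eq_abs, abs_mul]
      congr 1
      rw [abs_of_pos (by positivity)]
    rw [this]
    calc ((n : ℝ) + 1) * |f (t + ((n : ℝ) + 1)⁻¹) - f t|
        ≤ ((n : ℝ) + 1) * ((K : ℝ) * ((n : ℝ) + 1)⁻¹) := by
          apply mul_le_mul_of_nonneg_left ‹_› (by positivity)
      _ = (K : ℝ) := by field_simp
  have hd : ∀ᵐ t ∂volume, DifferentiableAt ℝ f t := hl.ae_differentiableAt (μ := volume)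
  have hlim : ∀ᵐ t ∂(volume.restrict (Ioc a b)),
      Tendsto (fun n => F n t) atTop (𝓝 (deriv f t)) := by
    filter_upwards [ae_restrict_of_ae hd] with t ht
    have H := ht.hasDerivAt
    rw [hasDerivAt_iff_tendsto_slope] at H
    have h1 : Tendsto (fun n : ℕ => t + ((n : ℝ) + 1)⁻¹) atTop (𝓝[≠] t) := by
      apply tendsto_nhdsWithin_of_tendsto_nhds_of_eventually_within
      · have : Tendsto (fun n : ℕ => ((n : ℝ) + 1)⁻¹) atTop (𝓝 0) := by
          simpa [one_div] using tendsto_one_div_add_atTop_nhds_zero_nat (𝕜 := ℝ)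
        simpa using (tendsto_const_nhds (x := t)).add this
      · apply Eventually.of_forall
        intro n
        have : (0:ℝ) < ((n : ℝ) + 1)⁻¹ := by positivity
        simp only [mem_compl_iff, mem_singleton_iff]
        intro hcontra
        nlinarith [hcontra]
    have h2 := H.comp h1
    convert h2 using 1
    funext n
    have hpos : (0:ℝ) < ((n : ℝ) + 1)⁻¹ := by positivity
    simp only [Function.comp_apply, slope_def_field, hF]
    rw [div_eq_mul_inv]
    have e : t + ((n : ℝ) + 1)⁻¹ - t = ((n : ℝ) + 1)⁻¹ := by ring
    rw [e, inv_inv]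
    ring
  have key := tendsto_integral_of_dominated_convergence (fun _ => (K : ℝ)) hFm
    (integrable_const _) hbound hlim
  have key2 : Tendsto (fun n => ∫ t in Ioc a b, F n t) atTop (𝓝 (f b - f a)) := by
    have heq : ∀ n : ℕ, ∫ t in Ioc a b, F n t
        = (((n : ℝ) + 1) * ∫ t in b..(b + ((n : ℝ) + 1)⁻¹), f t)
          - (((n : ℝ) + 1) * ∫ t in a..(a + ((n : ℝ) + 1)⁻¹), f t) := by
      intro n
      set h : ℝ := ((n : ℝ) + 1)⁻¹ with hh
      have hpos : (0:ℝ) < h := by positivity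
      have hint : ∀ c d : ℝ, IntervalIntegrable f volume c d := fun c d =>
        hcont.intervalIntegrable c d
      have e0 : ∫ t in Ioc a b, F n t = ∫ t in a..b, F n t := by
        rw [intervalIntegral.integral_of_le hab]
      have e1 : ∫ t in a..b, F n t
          = ((n : ℝ) + 1) * ((∫ t in a..b, f (t + h)) - ∫ t in a..b, f t) := by
        have hshift : Continuous fun t : ℝ => f (t + h) :=
          hcont.comp (continuous_id.add continuous_const)
        simp only [hF]
        rw [intervalIntegral.integral_const_mul]
        congr 1
        rw [intervalIntegral.integral_sub (hshift.intervalIntegrable _ _) (hint a b)]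
      have e2 : (∫ t in a..b, f (t + h)) = ∫ t in (a+h)..(b+h), f t := by
        rw [intervalIntegral.integral_comp_add_right]
      have e3 : (∫ t in a..(b+h), f t) = (∫ t in a..b, f t) + ∫ t in b..(b+h), f t :=
        (intervalIntegral.integral_add_adjacent_intervals (hint a b) (hint b (b+h))).symm
      have e4 : (∫ t in a..(b+h), f t) = (∫ t in a..(a+h), f t) + ∫ t in (a+h)..(b+h), f t :=
        (intervalIntegral.integral_add_adjacent_intervals (hint a (a+h)) (hint (a+h) (b+h))).symm
      rw [e0, e1, e2]
      have : (∫ t in (a+h)..(b+h), f t) - (∫ t in a..b, f t)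
          = (∫ t in b..(b+h), f t) - (∫ t in a..(a+h), f t) := by linarith
      rw [this]
      ring
    rw [tendsto_congr heq]
    exact (aux_avg hl b).sub (aux_avg hl a)
  have := tendsto_nhds_unique key key2
  rw [intervalIntegral.integral_of_le hab]
  exact this

def IsCopula (C : ℝ → ℝ → ℝ) : Prop :=
  (∀ u ∈ Icc (0:ℝ) 1, ∀ v ∈ Icc (0:ℝ) 1, C u v ∈ Icc (0:ℝ) 1) ∧
  (∀ u ∈ Icc (0:ℝ) 1, C u 0 = 0 ∧ C u 1 = u) ∧
  (∀ v ∈ Icc (0:ℝ) 1, C 0 v = 0 ∧ C 1 v = v) ∧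
  (∀ u₁ ∈ Icc (0:ℝ) 1, ∀ u₂ ∈ Icc (0:ℝ) 1, ∀ v₁ ∈ Icc (0:ℝ) 1, ∀ v₂ ∈ Icc (0:ℝ) 1,
    u₁ ≤ u₂ → v₁ ≤ v₂ → 0 ≤ C u₂ v₂ - C u₁ v₂ - C u₂ v₁ + C u₁ v₁)

/-- The (a.e. defined) partial derivative of `C` with respect to its first argument. -/
def d1 (C : ℝ → ℝ → ℝ) (t v : ℝ) : ℝ := deriv (fun s => C s v) t

/-- Chatterjee's rank correlation. -/
def xi (C : ℝ → ℝ → ℝ) : ℝ :=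
  6 * (∫ v in (0:ℝ)..1, ∫ t in (0:ℝ)..1, (d1 C t v) ^ 2) - 2

/-- Spearman's footrule. -/
def psi (C : ℝ → ℝ → ℝ) : ℝ :=
  6 * (∫ v in (0:ℝ)..1, C v v) - 2

/-- Stochastically increasing: for each `v`, `t ↦ ∂₁C(t,v)` agrees a.e. on `[0,1]`
with a non-increasing function. -/
def IsSI (C : ℝ → ℝ → ℝ) : Prop :=
  ∀ v ∈ Icc (0:ℝ) 1, ∃ g : ℝ → ℝ, AntitoneOn g (Icc (0:ℝ) 1) ∧
    (∀ᵐ t ∂(volume.restrict (Icc (0:ℝ) 1)), d1 C t v = g t)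


/-! ### Copula basics -/

section CopulaBasics

variable {C : ℝ → ℝ → ℝ}

lemma cop_mono (hC : IsCopula C) {v : ℝ} (hv : v ∈ Icc (0:ℝ) 1) {s t : ℝ}
    (hs : s ∈ Icc (0:ℝ) 1) (ht : t ∈ Icc (0:ℝ) 1) (hst : s ≤ t) : C s v ≤ C t v := by
  have h0 : (0:ℝ) ∈ Icc (0:ℝ) 1 := by norm_num
  have := hC.2.2.2 s hs t ht 0 h0 v hv hst hv.1
  have h1 := (hC.2.1 s hs).1
  have h2 := (hC.2.1 t ht).1
  linarith

lemma cop_lip (hC : IsCopula C) {v : ℝ} (hv : v ∈ Icc (0:ℝ) 1) {s t : ℝ}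
    (hs : s ∈ Icc (0:ℝ) 1) (ht : t ∈ Icc (0:ℝ) 1) (hst : s ≤ t) :
    C t v - C s v ≤ t - s := by
  have h1 : (1:ℝ) ∈ Icc (0:ℝ) 1 := by norm_num
  have := hC.2.2.2 s hs t ht v hv 1 h1 hst hv.2
  have h2 := (hC.2.1 s hs).2
  have h3 := (hC.2.1 t ht).2
  linarith

lemma cop_mono2 (hC : IsCopula C) {u : ℝ} (hu : u ∈ Icc (0:ℝ) 1) {s t : ℝ}
    (hs : s ∈ Icc (0:ℝ) 1) (ht : t ∈ Icc (0:ℝ) 1) (hst : s ≤ t) : C u s ≤ C u t := by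
  have h0 : (0:ℝ) ∈ Icc (0:ℝ) 1 := by norm_num
  have := hC.2.2.2 0 h0 u hu s hs t ht hu.1 hst
  have h1 := (hC.2.2.1 s hs).1
  have h2 := (hC.2.2.1 t ht).1
  linarith

lemma cop_lip2 (hC : IsCopula C) {u : ℝ} (hu : u ∈ Icc (0:ℝ) 1) {s t : ℝ}
    (hs : s ∈ Icc (0:ℝ) 1) (ht : t ∈ Icc (0:ℝ) 1) (hst : s ≤ t) :
    C u t - C u s ≤ t - s := by
  have h1 : (1:ℝ) ∈ Icc (0:ℝ) 1 := by norm_num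
  have := hC.2.2.2 u hu 1 h1 s hs t ht hu.2 hst
  have h2 := (hC.2.2.1 s hs).2
  have h3 := (hC.2.2.1 t ht).2
  linarith

lemma cop_diag_contOn (hC : IsCopula C) : ContinuousOn (fun v => C v v) (Icc (0:ℝ) 1) := by
  have : LipschitzOnWith 2 (fun v => C v v) (Icc (0:ℝ) 1) := by
    rw [lipschitzOnWith_iff_dist_le_mul]
    intro x hx y hy
    rw [Real.dist_eq, Real.dist_eq]
    wlog hxy : y ≤ x generalizing x y
    · rw [abs_sub_comm, abs_sub_comm x y]
      exact this y hy x hx (by linarith [not_le.1 hxy])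
    have k1 : C x y - C x x ≤ 0 := by
      have := cop_mono2 hC hx hy hx hxy
      linarith
    have k2 : C x x - C x y ≤ x - y := cop_lip2 hC hx hy hx hxy
    have k3 : C y y - C x y ≤ 0 := by
      have := cop_mono hC hy hy hx hxy
      linarith
    have k4 : C x y - C y y ≤ x - y := cop_lip hC hy hy hx hxy
    have habs : |x - y| = x - y := abs_of_nonneg (by linarith)
    rw [habs, abs_le]
    push_cast
    constructor <;> linarith
  exact this.continuousOn

/-- the clamped section `s ↦ C (clamp s) v`. -/
def fv (C : ℝ → ℝ → ℝ) (v : ℝ) : ℝ → ℝ := fun s => C (max 0 (min s 1)) v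

lemma clamp_mem (s : ℝ) : max 0 (min s 1) ∈ Icc (0:ℝ) 1 :=
  ⟨le_max_left _ _, max_le (by norm_num) (min_le_right _ _)⟩

lemma clamp_eq {s : ℝ} (hs : s ∈ Icc (0:ℝ) 1) : max 0 (min s 1) = s := by
  rw [min_eq_left hs.2, max_eq_right hs.1]

lemma clamp_mono {s t : ℝ} (hst : s ≤ t) : max 0 (min s 1) ≤ max 0 (min t 1) :=
  max_le_max le_rfl (min_le_min hst le_rfl)

lemma clamp_lip {s t : ℝ} (hst : s ≤ t) :
    max 0 (min t 1) - max 0 (min s 1) ≤ t - s := by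
  simp only [max_def, min_def]
  split_ifs <;> linarith

lemma fv_eq (hC : IsCopula C) {v t : ℝ} (ht : t ∈ Icc (0:ℝ) 1) : fv C v t = C t v := by
  rw [fv, clamp_eq ht]

lemma fv_mono (hC : IsCopula C) {v : ℝ} (hv : v ∈ Icc (0:ℝ) 1) : Monotone (fv C v) :=
  fun s t hst => cop_mono hC hv (clamp_mem s) (clamp_mem t) (clamp_mono hst)

lemma fv_lip (hC : IsCopula C) {v : ℝ} (hv : v ∈ Icc (0:ℝ) 1) : LipschitzWith 1 (fv C v) := by
  rw [lipschitzWith_iff_dist_le_mul]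
  intro x y
  rw [Real.dist_eq, Real.dist_eq]
  wlog hxy : y ≤ x generalizing x y
  · rw [abs_sub_comm, abs_sub_comm x y]
    exact this y x (by linarith [not_le.1 hxy])
  have h1 : fv C v y ≤ fv C v x := fv_mono hC hv hxy
  have h2 : fv C v x - fv C v y ≤ max 0 (min x 1) - max 0 (min y 1) :=
    cop_lip hC hv (clamp_mem y) (clamp_mem x) (clamp_mono hxy)
  have h3 := clamp_lip hxy
  rw [abs_of_nonneg (by linarith), abs_of_nonneg (by linarith)]
  push_cast
  linarith

lemma fv_eventuallyEq {v t : ℝ} (hC : IsCopula C) (ht : t ∈ Ioo (0:ℝ) 1) :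
    (fun s => C s v) =ᶠ[𝓝 t] fv C v := by
  filter_upwards [isOpen_Ioo.eventually_mem ht] with u hu
  rw [fv_eq hC (Ioo_subset_Icc_self hu)]

lemma d1_eq_deriv_fv {v t : ℝ} (hC : IsCopula C) (ht : t ∈ Ioo (0:ℝ) 1) :
    d1 C t v = deriv (fv C v) t :=
  Filter.EventuallyEq.deriv_eq (fv_eventuallyEq hC ht)

lemma d1_mem (hC : IsCopula C) {v : ℝ} (hv : v ∈ Icc (0:ℝ) 1) {t : ℝ} (ht : t ∈ Ioo (0:ℝ) 1) :
    d1 C t v ∈ Icc (0:ℝ) 1 := by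
  rw [d1_eq_deriv_fv hC ht]
  exact deriv_mem_of_monotone_lipschitz (fv_mono hC hv) (fv_lip hC hv) t

lemma d1_meas (C : ℝ → ℝ → ℝ) (v : ℝ) : Measurable (fun t => d1 C t v) :=
  measurable_deriv _

lemma d1_ii (hC : IsCopula C) {v : ℝ} (hv : v ∈ Icc (0:ℝ) 1) {u₁ u₂ : ℝ}
    (h1 : 0 ≤ u₁) (h12 : u₁ ≤ u₂) (h2 : u₂ ≤ 1) :
    IntervalIntegrable (fun t => d1 C t v) volume u₁ u₂ := by
  apply ii_of_bounded (d1_meas C v) h12 (M := 1)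
  filter_upwards [self_mem_ae_restrict measurableSet_Ioc, ae_restrict_of_ae (ae_ne_vol 1)]
    with t htm htne
  have ht : t ∈ Ioo (0:ℝ) 1 := ⟨lt_of_le_of_lt h1 htm.1, lt_of_le_of_ne (htm.2.trans h2) htne⟩
  have := d1_mem hC hv ht
  rw [abs_le]
  exact ⟨by linarith [this.1], this.2⟩

lemma d1_sq_ii (hC : IsCopula C) {v : ℝ} (hv : v ∈ Icc (0:ℝ) 1) {u₁ u₂ : ℝ}
    (h1 : 0 ≤ u₁) (h12 : u₁ ≤ u₂) (h2 : u₂ ≤ 1) :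
    IntervalIntegrable (fun t => (d1 C t v) ^ 2) volume u₁ u₂ := by
  apply ii_of_bounded ((d1_meas C v).pow_const 2) h12 (M := 1)
  filter_upwards [self_mem_ae_restrict measurableSet_Ioc, ae_restrict_of_ae (ae_ne_vol 1)]
    with t htm htne
  have ht : t ∈ Ioo (0:ℝ) 1 := ⟨lt_of_le_of_lt h1 htm.1, lt_of_le_of_ne (htm.2.trans h2) htne⟩
  have := d1_mem hC hv ht
  rw [abs_le]
  constructor
  · nlinarith [this.1, this.2]
  · nlinarith [this.1, this.2]

lemma cop_FTC (hC : IsCopula C) {v : ℝ} (hv : v ∈ Icc (0:ℝ) 1) {u₁ u₂ : ℝ}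
    (h0 : 0 ≤ u₁) (h12 : u₁ ≤ u₂) (h2 : u₂ ≤ 1) :
    ∫ t in u₁..u₂, d1 C t v = C u₂ v - C u₁ v := by
  have h1 : ∫ t in u₁..u₂, d1 C t v = ∫ t in u₁..u₂, deriv (fv C v) t := by
    apply intervalIntegral.integral_congr_ae
    filter_upwards [ae_ne_vol 1] with t h1t ht
    rw [uIoc_of_le h12] at ht
    exact d1_eq_deriv_fv hC ⟨lt_of_le_of_lt h0 ht.1, lt_of_le_of_ne (ht.2.trans h2) h1t⟩
  rw [h1, integral_deriv_lipschitz (fv_lip hC hv) h12, fv_eq hC ⟨h0.trans h12, h2⟩,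
    fv_eq hC ⟨h0, h12.trans h2⟩]

end CopulaBasics

/-! ### Per-`v` inequalities and the forward direction -/

section PerV

variable {C : ℝ → ℝ → ℝ}

lemma inner_le_diag (hC : IsCopula C) (hSI : IsSI C) {v : ℝ} (hv : v ∈ Ioo (0:ℝ) 1) :
    (∫ t in (0:ℝ)..1, (d1 C t v) ^ 2) ≤ C v v := by
  obtain ⟨g, hg_anti, hg_ae⟩ := hSI v (Ioo_subset_Icc_self hv)
  have hvIcc : v ∈ Icc (0:ℝ) 1 := Ioo_subset_Icc_self hv
  have hv0 := hv.1
  have hv1 := hv.2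
  have hC0 : C 0 v = 0 := (hC.2.2.1 v hvIcc).1
  have hC1 : C 1 v = v := (hC.2.2.1 v hvIcc).2
  have I1 : ∫ t in (0:ℝ)..v, d1 C t v = C v v := by
    rw [cop_FTC hC hvIcc le_rfl hv0.le hv1.le, hC0, sub_zero]
  have I2 : ∫ t in v..(1:ℝ), d1 C t v = v - C v v := by
    rw [cop_FTC hC hvIcc hv0.le hv1.le le_rfl, hC1]
  set m := g v with hm
  have hiiA := d1_ii hC hvIcc le_rfl hv0.le hv1.le
  have hiiA2 := d1_sq_ii hC hvIcc le_rfl hv0.le hv1.le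
  have hiiB := d1_ii hC hvIcc hv0.le hv1.le le_rfl
  have hiiB2 := d1_sq_ii hC hvIcc hv0.le hv1.le le_rfl
  have hae1 : ∀ᵐ t ∂(volume.restrict (Icc (0:ℝ) v)),
      (d1 C t v) ^ 2 ≤ d1 C t v - m + m * d1 C t v := by
    have hsub : Icc (0:ℝ) v ⊆ Icc (0:ℝ) 1 := Icc_subset_Icc_right hv1.le
    filter_upwards [ae_mono (Measure.restrict_mono hsub le_rfl) hg_ae,
      self_mem_ae_restrict measurableSet_Icc,
      ae_restrict_of_ae (ae_ne_vol 0)] with t heq htm ht0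
    have htIoo : t ∈ Ioo (0:ℝ) 1 := ⟨htm.1.lt_of_ne (Ne.symm ht0), lt_of_le_of_lt htm.2 hv1⟩
    have hd := d1_mem hC hvIcc htIoo
    have hgt : m ≤ g t := hg_anti ⟨htm.1, htm.2.trans hv1.le⟩ hvIcc htm.2
    have hgt' : m ≤ d1 C t v := heq ▸ hgt
    nlinarith [hd.1, hd.2, hgt']
  have hrhs_ii : IntervalIntegrable (fun t => d1 C t v - m + m * d1 C t v) volume 0 v :=
    (hiiA.sub intervalIntegrable_const).add (hiiA.const_mul m)
  have E1 : (∫ t in (0:ℝ)..v, (d1 C t v) ^ 2) ≤ C v v - m * v + m * C v v := by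
    have hmono := intervalIntegral.integral_mono_ae_restrict hv0.le hiiA2 hrhs_ii hae1
    have hval : ∫ t in (0:ℝ)..v, (d1 C t v - m + m * d1 C t v)
        = (C v v - m * v) + m * C v v := by
      rw [intervalIntegral.integral_add (hiiA.sub intervalIntegrable_const) (hiiA.const_mul m),
        intervalIntegral.integral_sub hiiA intervalIntegrable_const,
        intervalIntegral.integral_const_mul, I1, intervalIntegral.integral_const,
        smul_eq_mul]
      ring
    rw [hval] at hmono
    linarith
  have hae2 : ∀ᵐ t ∂(volume.restrict (Icc v (1:ℝ))),
      (d1 C t v) ^ 2 ≤ m * d1 C t v := by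
    have hsub : Icc v (1:ℝ) ⊆ Icc (0:ℝ) 1 := Icc_subset_Icc_left hv0.le
    filter_upwards [ae_mono (Measure.restrict_mono hsub le_rfl) hg_ae,
      self_mem_ae_restrict measurableSet_Icc,
      ae_restrict_of_ae (ae_ne_vol 1)] with t heq htm ht1
    have htIoo : t ∈ Ioo (0:ℝ) 1 := ⟨lt_of_lt_of_le hv0 htm.1, htm.2.lt_of_ne ht1⟩
    have hd := d1_mem hC hvIcc htIoo
    have hgt : g t ≤ m := hg_anti hvIcc ⟨hv0.le.trans htm.1, htm.2⟩ htm.1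
    have hgt' : d1 C t v ≤ m := heq ▸ hgt
    nlinarith [hd.1, hd.2, hgt']
  have E2 : (∫ t in v..(1:ℝ), (d1 C t v) ^ 2) ≤ m * (v - C v v) := by
    have hmono := intervalIntegral.integral_mono_ae_restrict hv1.le hiiB2
      (hiiB.const_mul m) hae2
    rw [intervalIntegral.integral_const_mul, I2] at hmono
    exact hmono
  have hsplit := intervalIntegral.integral_add_adjacent_intervals hiiA2 hiiB2
  linarith

lemma inner_ge_cs (hC : IsCopula C) {v : ℝ} (hv : v ∈ Ioo (0:ℝ) 1) :
    (C v v) ^ 2 / v + (v - C v v) ^ 2 / (1 - v) ≤ ∫ t in (0:ℝ)..1, (d1 C t v) ^ 2 := by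
  have hvIcc : v ∈ Icc (0:ℝ) 1 := Ioo_subset_Icc_self hv
  have hv0 := hv.1
  have hv1 := hv.2
  have hC0 : C 0 v = 0 := (hC.2.2.1 v hvIcc).1
  have hC1 : C 1 v = v := (hC.2.2.1 v hvIcc).2
  have I1 : ∫ t in (0:ℝ)..v, d1 C t v = C v v := by
    rw [cop_FTC hC hvIcc le_rfl hv0.le hv1.le, hC0, sub_zero]
  have I2 : ∫ t in v..(1:ℝ), d1 C t v = v - C v v := by
    rw [cop_FTC hC hvIcc hv0.le hv1.le le_rfl, hC1]
  have hiiA := d1_ii hC hvIcc le_rfl hv0.le hv1.le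
  have hiiA2 := d1_sq_ii hC hvIcc le_rfl hv0.le hv1.le
  have hiiB := d1_ii hC hvIcc hv0.le hv1.le le_rfl
  have hiiB2 := d1_sq_ii hC hvIcc hv0.le hv1.le le_rfl
  have E1 : (C v v) ^ 2 / v ≤ ∫ t in (0:ℝ)..v, (d1 C t v) ^ 2 := by
    set c := C v v / v with hc
    have h0 : (0:ℝ) ≤ ∫ t in (0:ℝ)..v, (d1 C t v - c) ^ 2 :=
      intervalIntegral.integral_nonneg hv0.le fun t _ => sq_nonneg _
    have hexp : ∫ t in (0:ℝ)..v, (d1 C t v - c) ^ 2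
        = (∫ t in (0:ℝ)..v, (d1 C t v) ^ 2) - 2 * c * C v v + c ^ 2 * v := by
      have e : (fun t => (d1 C t v - c) ^ 2)
          = fun t => ((d1 C t v) ^ 2 - (2 * c) * d1 C t v) + c ^ 2 := by
        funext t; ring
      rw [e, intervalIntegral.integral_add (hiiA2.sub (hiiA.const_mul (2 * c)))
        intervalIntegrable_const,
        intervalIntegral.integral_sub hiiA2 (hiiA.const_mul (2 * c)),
        intervalIntegral.integral_const_mul, I1, intervalIntegral.integral_const,
        smul_eq_mul]
      ring
    rw [hexp] at h0
    have hval : 2 * c * C v v - c ^ 2 * v = (C v v) ^ 2 / v := by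
      rw [hc]; field_simp; ring
    linarith
  have E2 : (v - C v v) ^ 2 / (1 - v) ≤ ∫ t in v..(1:ℝ), (d1 C t v) ^ 2 := by
    set c := (v - C v v) / (1 - v) with hc
    have h0 : (0:ℝ) ≤ ∫ t in v..(1:ℝ), (d1 C t v - c) ^ 2 :=
      intervalIntegral.integral_nonneg hv1.le fun t _ => sq_nonneg _
    have hexp : ∫ t in v..(1:ℝ), (d1 C t v - c) ^ 2
        = (∫ t in v..(1:ℝ), (d1 C t v) ^ 2) - 2 * c * (v - C v v) + c ^ 2 * (1 - v) := by
      have e : (fun t => (d1 C t v - c) ^ 2)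
          = fun t => ((d1 C t v) ^ 2 - (2 * c) * d1 C t v) + c ^ 2 := by
        funext t; ring
      rw [e, intervalIntegral.integral_add (hiiB2.sub (hiiB.const_mul (2 * c)))
        intervalIntegrable_const,
        intervalIntegral.integral_sub hiiB2 (hiiB.const_mul (2 * c)),
        intervalIntegral.integral_const_mul, I2, intervalIntegral.integral_const,
        smul_eq_mul]
      ring
    rw [hexp] at h0
    have hne : (1:ℝ) - v ≠ 0 := by linarith
    have hval : 2 * c * (v - C v v) - c ^ 2 * (1 - v) = (v - C v v) ^ 2 / (1 - v) := by
      rw [hc]; field_simp; ring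
    linarith
  have hsplit := intervalIntegral.integral_add_adjacent_intervals hiiA2 hiiB2
  linarith

lemma inner_monoOn (hC : IsCopula C) :
    MonotoneOn (fun v => ∫ t in (0:ℝ)..1, (d1 C t v) ^ 2) (Icc (0:ℝ) 1) := by
  intro v₁ h₁ v₂ h₂ h12
  apply intervalIntegral.integral_mono_ae_restrict zero_le_one
    (d1_sq_ii hC h₁ le_rfl zero_le_one le_rfl) (d1_sq_ii hC h₂ le_rfl zero_le_one le_rfl)
  filter_upwards [ae_restrict_of_ae ((fv_lip hC h₁).ae_differentiableAt (μ := volume)),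
    ae_restrict_of_ae ((fv_lip hC h₂).ae_differentiableAt (μ := volume)),
    self_mem_ae_restrict measurableSet_Icc,
    ae_restrict_of_ae (ae_ne_vol 0), ae_restrict_of_ae (ae_ne_vol 1)]
    with t hD1 hD2 htm ht0 ht1
  have htIoo : t ∈ Ioo (0:ℝ) 1 := ⟨htm.1.lt_of_ne (Ne.symm ht0), htm.2.lt_of_ne ht1⟩
  have htI : t ∈ Icc (0:ℝ) 1 := Ioo_subset_Icc_self htIoo
  have hnn := (d1_mem hC h₁ htIoo).1
  have key : d1 C t v₁ ≤ d1 C t v₂ := by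
    rw [d1_eq_deriv_fv hC htIoo, d1_eq_deriv_fv hC htIoo]
    have H1 := hD1.hasDerivAt
    rw [hasDerivAt_iff_tendsto_slope] at H1
    have H2 := hD2.hasDerivAt
    rw [hasDerivAt_iff_tendsto_slope] at H2
    have hmono : 𝓝[>] t ≤ 𝓝[≠] t := nhdsWithin_mono t fun x hx => ne_of_gt hx
    refine le_of_tendsto_of_tendsto (H1.mono_left hmono) (H2.mono_left hmono) ?_
    filter_upwards [Ioo_mem_nhdsGT_of_mem (Set.mem_Ico.2 ⟨le_rfl, htIoo.2⟩)] with x hx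
    have hxI : x ∈ Icc (0:ℝ) 1 := ⟨(htIoo.1.trans hx.1).le, hx.2.le⟩
    have hden : 0 < x - t := sub_pos.2 hx.1
    have hrect := hC.2.2.2 t htI x hxI v₁ h₁ v₂ h₂ hx.1.le h12
    rw [slope_def_field, slope_def_field, fv_eq hC hxI, fv_eq hC htI, fv_eq hC hxI,
      fv_eq hC htI]
    rw [div_le_div_iff₀ hden hden]
    nlinarith [mul_nonneg hrect hden.le]
  calc (d1 C t v₁) ^ 2 ≤ (d1 C t v₂) ^ 2 := by nlinarith [hnn, key]
    _ = (fun t => (d1 C t v₂) ^ 2) t := rfl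

/-- algebraic convexity inequality -/
lemma convexity_alg {v w μ : ℝ} (hv : v ∈ Ioo (0:ℝ) 1) :
    v * (v + μ * (1 - v)) ^ 2 + v ^ 2 * (1 - v) * (1 - μ) ^ 2
      + 2 * μ * (w - v ^ 2 - μ * v * (1 - v))
      ≤ w ^ 2 / v + (v - w) ^ 2 / (1 - v) := by
  have hv0 := hv.1
  have hv1 : (0:ℝ) < 1 - v := by linarith [hv.2]
  rw [div_add_div _ _ (ne_of_gt hv0) (ne_of_gt hv1), le_div_iff₀ (by positivity)]
  nlinarith [sq_nonneg (w - v ^ 2 - μ * v * (1 - v)), hv0, hv1, mul_pos hv0 hv1]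

/-- Forward direction: every SI copula lands in the region. -/
lemma forward {C : ℝ → ℝ → ℝ} (hC : IsCopula C) (hSI : IsSI C) :
    xi C ∈ Icc (0:ℝ) 1 ∧ psi C ∈ Icc (0:ℝ) 1 ∧ xi C ≤ psi C ∧ psi C ≤ Real.sqrt (xi C) := by
  set A := ∫ v in (0:ℝ)..1, C v v with hA
  set μ := 6 * A - 2 with hmu
  have hpsi : psi C = μ := rfl
  set bfun := fun v => ∫ t in (0:ℝ)..1, (d1 C t v) ^ 2 with hbfun
  have hxi : xi C = 6 * (∫ v in (0:ℝ)..1, bfun v) - 2 := rfl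
  have hb_ii : IntervalIntegrable bfun volume 0 1 := by
    apply MonotoneOn.intervalIntegrable
    rw [uIcc_of_le zero_le_one]
    exact inner_monoOn hC
  have hdiag_c : ContinuousOn (fun v => C v v) (Icc (0:ℝ) 1) := cop_diag_contOn hC
  have hdiag_ii : IntervalIntegrable (fun v => C v v) volume 0 1 := by
    apply ContinuousOn.intervalIntegrable
    rw [uIcc_of_le zero_le_one]
    exact hdiag_c
  have key1 : (∫ v in (0:ℝ)..1, bfun v) ≤ A := by
    apply intervalIntegral.integral_mono_ae_restrict zero_le_one hb_ii hdiag_ii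
    filter_upwards [self_mem_ae_restrict measurableSet_Icc,
      ae_restrict_of_ae (ae_ne_vol 0), ae_restrict_of_ae (ae_ne_vol 1)] with v hm h0 h1
    exact inner_le_diag hC hSI ⟨hm.1.lt_of_ne (Ne.symm h0), hm.2.lt_of_ne h1⟩
  set R := fun v => v * (v + μ * (1 - v)) ^ 2 + v ^ 2 * (1 - v) * (1 - μ) ^ 2
    + 2 * μ * (C v v - v ^ 2 - μ * v * (1 - v)) with hR
  have hpoly1 : Continuous fun v : ℝ => v * (v + μ * (1 - v)) ^ 2
      + v ^ 2 * (1 - v) * (1 - μ) ^ 2 := by continuity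
  have hpoly2 : Continuous fun v : ℝ => v ^ 2 + μ * v * (1 - v) := by continuity
  have hR_c : ContinuousOn R (Icc (0:ℝ) 1) := by
    apply ContinuousOn.add hpoly1.continuousOn
    apply ContinuousOn.mul continuousOn_const
    have : (fun v => C v v - v ^ 2 - μ * v * (1 - v))
        = fun v => C v v - (v ^ 2 + μ * v * (1 - v)) := by funext v; ring
    rw [this]
    exact hdiag_c.sub hpoly2.continuousOn
  have hR_ii : IntervalIntegrable R volume 0 1 := by
    apply ContinuousOn.intervalIntegrable
    rw [uIcc_of_le zero_le_one]
    exact hR_c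
  have key2 : (∫ v in (0:ℝ)..1, R v) ≤ ∫ v in (0:ℝ)..1, bfun v := by
    apply intervalIntegral.integral_mono_ae_restrict zero_le_one hR_ii hb_ii
    filter_upwards [self_mem_ae_restrict measurableSet_Icc,
      ae_restrict_of_ae (ae_ne_vol 0), ae_restrict_of_ae (ae_ne_vol 1)] with v hm h0 h1
    have hvIoo : v ∈ Ioo (0:ℝ) 1 := ⟨hm.1.lt_of_ne (Ne.symm h0), hm.2.lt_of_ne h1⟩
    calc R v ≤ (C v v) ^ 2 / v + (v - C v v) ^ 2 / (1 - v) := convexity_alg hvIoo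
      _ ≤ bfun v := inner_ge_cs hC hvIoo
  have key3 : (∫ v in (0:ℝ)..1, R v) = (-μ ^ 2 / 2 + (1 - μ) ^ 2 / 3) + 2 * μ * A := by
    have hsplit : R = fun v => (-μ ^ 2 * v + (1 - μ) ^ 2 * v ^ 2) + (2 * μ) * C v v := by
      funext v
      rw [hR]
      ring
    have c1 : Continuous fun v : ℝ => -μ ^ 2 * v := continuous_const.mul continuous_id
    have c2 : Continuous fun v : ℝ => (1 - μ) ^ 2 * v ^ 2 :=
      continuous_const.mul (continuous_pow 2)
    rw [hsplit, intervalIntegral.integral_add (f := fun v => -μ ^ 2 * v + (1 - μ) ^ 2 * v ^ 2)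
      ((c1.add c2).intervalIntegrable _ _) (hdiag_ii.const_mul (2 * μ)),
      intervalIntegral.integral_const_mul]
    congr 1
    rw [intervalIntegral.integral_add (c1.intervalIntegrable _ _) (c2.intervalIntegrable _ _),
      intervalIntegral.integral_const_mul, intervalIntegral.integral_const_mul,
      integral_id, integral_pow]
    norm_num
    ring
  have hxile : xi C ≤ psi C := by
    rw [hxi, hpsi, hmu]
    linarith [key1]
  have hxige : psi C ^ 2 ≤ xi C := by
    rw [hxi, hpsi]
    have h1 : (-μ ^ 2 / 2 + (1 - μ) ^ 2 / 3) + 2 * μ * A ≤ ∫ v in (0:ℝ)..1, bfun v :=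
      key3 ▸ key2
    have e : μ ^ 2 = 6 * ((-μ ^ 2 / 2 + (1 - μ) ^ 2 / 3) + 2 * μ * A) - 2 := by
      rw [hmu]
      ring
    rw [e]
    linarith
  have h0psi : 0 ≤ psi C := by nlinarith
  have h1psi : psi C ≤ 1 := by nlinarith
  have hx0 : 0 ≤ xi C := by nlinarith [sq_nonneg (psi C)]
  have hx1 : xi C ≤ 1 := by linarith
  exact ⟨⟨hx0, hx1⟩, ⟨h0psi, h1psi⟩, hxile, (Real.le_sqrt h0psi hx0).2 hxige⟩

end PerV

/-! ### The family of copulas attaining the region -/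

def Eb (b u v : ℝ) : ℝ := if u ≤ b ∧ v ≤ b then u * v / b else min u v

def Cab (a b u v : ℝ) : ℝ := a * min u v + (1 - a) * Eb b u v

def gab (a b v : ℝ) : ℝ → ℝ := fun t =>
  if v ≤ b then
    (if t ≤ v then a + (1 - a) * (v / b) else if t ≤ b then (1 - a) * (v / b) else 0)
  else (if t ≤ v then 1 else 0)

section Family

variable {a b : ℝ}

lemma isCopula_min : IsCopula fun u v => min u v := by
  refine ⟨?_, ?_, ?_, ?_⟩
  · intro u hu v hv
    exact ⟨le_min hu.1 hv.1, (min_le_left _ _).trans hu.2⟩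
  · intro u hu
    exact ⟨min_eq_right hu.1, min_eq_left hu.2⟩
  · intro v hv
    exact ⟨min_eq_left hv.1, min_eq_right hv.2⟩
  · intro u₁ _ u₂ _ v₁ _ v₂ _ h12 h34
    simp only [min_def]
    split_ifs <;> linarith

lemma isCopula_Eb (hb0 : 0 < b) (hb1 : b ≤ 1) : IsCopula (Eb b) := by
  refine ⟨?_, ?_, ?_, ?_⟩
  · intro u hu v hv
    unfold Eb
    split_ifs with h
    · refine ⟨div_nonneg (mul_nonneg hu.1 hv.1) hb0.le, ?_⟩
      rw [div_le_one hb0]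
      nlinarith [hu.1, hv.1, hv.2, h.1]
    · exact ⟨le_min hu.1 hv.1, (min_le_left _ _).trans hu.2⟩
  · intro u hu
    constructor
    · unfold Eb
      split_ifs with h
      · rw [mul_zero, zero_div]
      · exact min_eq_right hu.1
    · unfold Eb
      split_ifs with h
      · have hb : b = 1 := le_antisymm hb1 h.2
        rw [hb, mul_one, div_one]
      · exact min_eq_left hu.2
  · intro v hv
    constructor
    · unfold Eb
      split_ifs with h
      · rw [zero_mul, zero_div]
      · exact min_eq_left hv.1
    · unfold Eb
      split_ifs with h
      · have hb : b = 1 := le_antisymm hb1 h.1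
        rw [hb, one_mul, div_one]
      · exact min_eq_right hv.2
  · intro u₁ h₁ u₂ h₂ v₁ h₃ v₂ h₄ h12 h34
    rcases le_or_gt u₂ b with hu2 | hu2
    · rcases le_or_gt v₂ b with hv2 | hv2
      · have hu1 : u₁ ≤ b := h12.trans hu2
        have hv1 : v₁ ≤ b := h34.trans hv2
        rw [Eb, if_pos ⟨hu2, hv2⟩, Eb, if_pos ⟨hu1, hv2⟩, Eb, if_pos ⟨hu2, hv1⟩, Eb,
          if_pos ⟨hu1, hv1⟩]
        have key : 0 ≤ (u₂ - u₁) * (v₂ - v₁) / b :=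
          div_nonneg (mul_nonneg (by linarith) (by linarith)) hb0.le
        have e : (u₂ - u₁) * (v₂ - v₁) / b
            = u₂ * v₂ / b - u₁ * v₂ / b - u₂ * v₁ / b + u₁ * v₁ / b := by
          field_simp
          ring
        linarith [e ▸ key]
      · have hu1 : u₁ ≤ b := h12.trans hu2
        rcases le_or_gt v₁ b with hv1 | hv1
        · rw [Eb, if_neg (by simp only [not_and]; intro _; exact not_le.2 hv2),
            Eb, if_neg (by simp only [not_and]; intro _; exact not_le.2 hv2),
            Eb, if_pos ⟨hu2, hv1⟩, Eb, if_pos ⟨hu1, hv1⟩,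
            min_eq_left (by linarith : u₂ ≤ v₂), min_eq_left (by linarith : u₁ ≤ v₂)]
          have key : 0 ≤ (u₂ - u₁) * (b - v₁) / b :=
            div_nonneg (mul_nonneg (by linarith) (by linarith)) hb0.le
          have e : (u₂ - u₁) * (b - v₁) / b
              = u₂ - u₁ - u₂ * v₁ / b + u₁ * v₁ / b := by
            field_simp
            ring
          linarith [e ▸ key]
        · rw [Eb, if_neg (by simp only [not_and]; intro _; exact not_le.2 hv2),
            Eb, if_neg (by simp only [not_and]; intro _; exact not_le.2 hv2),
            Eb, if_neg (by simp only [not_and]; intro _; exact not_le.2 hv1),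
            Eb, if_neg (by simp only [not_and]; intro _; exact not_le.2 hv1),
            min_eq_left (by linarith : u₂ ≤ v₂), min_eq_left (by linarith : u₁ ≤ v₂),
            min_eq_left (by linarith : u₂ ≤ v₁), min_eq_left (by linarith : u₁ ≤ v₁)]
          linarith
    · rcases le_or_gt v₂ b with hv2 | hv2
      · have hv1 : v₁ ≤ b := h34.trans hv2
        rcases le_or_gt u₁ b with hu1 | hu1
        · rw [Eb, if_neg (fun h => absurd h.1 (not_le.2 hu2)),
            Eb, if_pos ⟨hu1, hv2⟩,
            Eb, if_neg (fun h => absurd h.1 (not_le.2 hu2)),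
            Eb, if_pos ⟨hu1, hv1⟩,
            min_eq_right (by linarith : v₂ ≤ u₂), min_eq_right (by linarith : v₁ ≤ u₂)]
          have key : 0 ≤ (v₂ - v₁) * (b - u₁) / b :=
            div_nonneg (mul_nonneg (by linarith) (by linarith)) hb0.le
          have e : (v₂ - v₁) * (b - u₁) / b
              = v₂ - u₁ * v₂ / b - v₁ + u₁ * v₁ / b := by
            field_simp
            ring
          linarith [e ▸ key]
        · rw [Eb, if_neg (fun h => absurd h.1 (not_le.2 hu2)),
            Eb, if_neg (fun h => absurd h.1 (not_le.2 hu1)),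
            Eb, if_neg (fun h => absurd h.1 (not_le.2 hu2)),
            Eb, if_neg (fun h => absurd h.1 (not_le.2 hu1)),
            min_eq_right (by linarith : v₂ ≤ u₂), min_eq_right (by linarith : v₂ ≤ u₁),
            min_eq_right (by linarith : v₁ ≤ u₂), min_eq_right (by linarith : v₁ ≤ u₁)]
          linarith
      · rcases le_or_gt u₁ b with hu1 | hu1
        · rcases le_or_gt v₁ b with hv1 | hv1
          · rw [Eb, if_neg (fun h => absurd h.1 (not_le.2 hu2)),
              Eb, if_neg (by simp only [not_and]; intro _; exact not_le.2 hv2),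
              Eb, if_neg (fun h => absurd h.1 (not_le.2 hu2)),
              Eb, if_pos ⟨hu1, hv1⟩,
              min_eq_left (by linarith : u₁ ≤ v₂), min_eq_right (by linarith : v₁ ≤ u₂)]
            have hminb : b ≤ min u₂ v₂ := le_min hu2.le hv2.le
            have key : 0 ≤ (b - u₁) * (b - v₁) / b :=
              div_nonneg (mul_nonneg (by linarith) (by linarith)) hb0.le
            have e : (b - u₁) * (b - v₁) / b = b - u₁ - v₁ + u₁ * v₁ / b := by
              field_simp
              ring
            have := e ▸ key
            linarith
          · rw [Eb, if_neg (fun h => absurd h.1 (not_le.2 hu2)),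
              Eb, if_neg (by simp only [not_and]; intro _; exact not_le.2 hv2),
              Eb, if_neg (by simp only [not_and]; intro _; exact not_le.2 hv1),
              Eb, if_neg (by simp only [not_and]; intro _; exact not_le.2 hv1),
              min_eq_left (by linarith : u₁ ≤ v₂), min_eq_left (by linarith : u₁ ≤ v₁)]
            have : min u₂ v₁ ≤ min u₂ v₂ := min_le_min le_rfl h34
            linarith
        · rcases le_or_gt v₁ b with hv1 | hv1
          · rw [Eb, if_neg (fun h => absurd h.1 (not_le.2 hu2)),
              Eb, if_neg (fun h => absurd h.1 (not_le.2 hu1)),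
              Eb, if_neg (fun h => absurd h.1 (not_le.2 hu2)),
              Eb, if_neg (fun h => absurd h.1 (not_le.2 hu1)),
              min_eq_right (by linarith : v₁ ≤ u₂), min_eq_right (by linarith : v₁ ≤ u₁)]
            have : min u₁ v₂ ≤ min u₂ v₂ := min_le_min h12 le_rfl
            linarith
          · rw [Eb, if_neg (fun h => absurd h.1 (not_le.2 hu2)),
              Eb, if_neg (fun h => absurd h.1 (not_le.2 hu1)),
              Eb, if_neg (fun h => absurd h.1 (not_le.2 hu2)),
              Eb, if_neg (fun h => absurd h.1 (not_le.2 hu1))]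
            simp only [min_def]
            split_ifs <;> linarith

lemma isCopula_combo {C₁ C₂ : ℝ → ℝ → ℝ} (h₁ : IsCopula C₁) (h₂ : IsCopula C₂)
    (ha0 : 0 ≤ a) (ha1 : a ≤ 1) :
    IsCopula fun u v => a * C₁ u v + (1 - a) * C₂ u v := by
  obtain ⟨r₁, b₁, c₁, q₁⟩ := h₁
  obtain ⟨r₂, b₂, c₂, q₂⟩ := h₂
  refine ⟨fun u hu v hv => ?_, fun u hu => ?_, fun v hv => ?_,
    fun u₁ h₁' u₂ h₂' v₁ h₃' v₂ h₄' h12 h34 => ?_⟩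
  · have k₁ := r₁ u hu v hv
    have k₂ := r₂ u hu v hv
    constructor
    · show 0 ≤ a * C₁ u v + (1 - a) * C₂ u v
      nlinarith [k₁.1, k₂.1]
    · show a * C₁ u v + (1 - a) * C₂ u v ≤ 1
      nlinarith [k₁.2, k₂.2]
  · constructor
    · show a * C₁ u 0 + (1 - a) * C₂ u 0 = 0
      rw [(b₁ u hu).1, (b₂ u hu).1]
      ring
    · show a * C₁ u 1 + (1 - a) * C₂ u 1 = u
      rw [(b₁ u hu).2, (b₂ u hu).2]
      ring
  · constructor
    · show a * C₁ 0 v + (1 - a) * C₂ 0 v = 0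
      rw [(c₁ v hv).1, (c₂ v hv).1]
      ring
    · show a * C₁ 1 v + (1 - a) * C₂ 1 v = v
      rw [(c₁ v hv).2, (c₂ v hv).2]
      ring
  · have k₁ := q₁ u₁ h₁' u₂ h₂' v₁ h₃' v₂ h₄' h12 h34
    have k₂ := q₂ u₁ h₁' u₂ h₂' v₁ h₃' v₂ h₄' h12 h34
    show 0 ≤ (a * C₁ u₂ v₂ + (1 - a) * C₂ u₂ v₂) - (a * C₁ u₁ v₂ + (1 - a) * C₂ u₁ v₂)
      - (a * C₁ u₂ v₁ + (1 - a) * C₂ u₂ v₁) + (a * C₁ u₁ v₁ + (1 - a) * C₂ u₁ v₁)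
    nlinarith [k₁, k₂]

lemma isCopula_Cab (ha0 : 0 ≤ a) (ha1 : a ≤ 1) (hb0 : 0 < b) (hb1 : b ≤ 1) :
    IsCopula fun u v => Cab a b u v :=
  isCopula_combo isCopula_min (isCopula_Eb hb0 hb1) ha0 ha1

lemma gab_antitone (ha0 : 0 ≤ a) (ha1 : a ≤ 1) (hb0 : 0 < b) {v : ℝ} (hv0 : 0 ≤ v) :
    AntitoneOn (gab a b v) (Icc (0:ℝ) 1) := by
  have hq0 : 0 ≤ (1 - a) * (v / b) := mul_nonneg (by linarith) (div_nonneg hv0 hb0.le)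
  intro x _ y _ hxy
  unfold gab
  split_ifs <;> linarith

lemma deriv_Cab (ha0 : 0 ≤ a) (ha1 : a ≤ 1) (hb0 : 0 < b) (hb1 : b ≤ 1) {v : ℝ}
    (hv : v ∈ Icc (0:ℝ) 1) {t : ℝ} (ht : t ∈ Ioo (0:ℝ) 1) (htv : t ≠ v) (htb : t ≠ b) :
    d1 (fun u v => Cab a b u v) t v = gab a b v t := by
  rw [d1]
  show deriv (fun s => Cab a b s v) t = gab a b v t
  rcases le_or_gt v b with hvb | hvb
  · rcases lt_or_gt_of_ne htv with h1 | h1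
    · have hev : ∀ᶠ u in 𝓝 t, Cab a b u v = (a + (1 - a) * (v / b)) * u + 0 := by
        filter_upwards [isOpen_Iio.eventually_mem (show t ∈ Iio v from h1)] with u hu
        have hu' : u < v := hu
        rw [Cab, Eb, if_pos ⟨(le_of_lt hu').trans hvb, hvb⟩, min_eq_left (le_of_lt hu')]
        field_simp
        ring
      rw [deriv_eq_of_eventually_affine hev]
      simp only [gab]
      rw [if_pos hvb, if_pos (le_of_lt h1)]
    · rcases lt_or_gt_of_ne htb with h2 | h2
      · have hev : ∀ᶠ u in 𝓝 t, Cab a b u v = ((1 - a) * (v / b)) * u + a * v := by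
          filter_upwards [isOpen_Ioo.eventually_mem (show t ∈ Ioo v b from ⟨h1, h2⟩)]
            with u hu
          rw [Cab, Eb, if_pos ⟨hu.2.le, hvb⟩, min_eq_right hu.1.le]
          field_simp
          ring
        rw [deriv_eq_of_eventually_affine hev]
        simp only [gab]
        rw [if_pos hvb, if_neg (not_le.2 h1), if_pos h2.le]
      · have hev : ∀ᶠ u in 𝓝 t, Cab a b u v = 0 * u + v := by
          filter_upwards [isOpen_Ioi.eventually_mem (show t ∈ Ioi b from h2)] with u hu
          have hu' : b < u := hu
          rw [Cab, Eb, if_neg (fun h => absurd h.1 (not_le.2 hu')),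
            min_eq_right (by linarith : v ≤ u)]
          ring
        rw [deriv_eq_of_eventually_affine hev]
        simp only [gab]
        rw [if_pos hvb, if_neg (not_le.2 (lt_of_le_of_lt hvb h2)), if_neg (not_le.2 h2)]
  · rcases lt_or_gt_of_ne htv with h1 | h1
    · have hev : ∀ᶠ u in 𝓝 t, Cab a b u v = 1 * u + 0 := by
        filter_upwards [isOpen_Iio.eventually_mem (show t ∈ Iio v from h1)] with u hu
        have hu' : u < v := hu
        rw [Cab, Eb, if_neg (by simp only [not_and]; intro _; exact not_le.2 hvb),
          min_eq_left hu'.le]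
        ring
      rw [deriv_eq_of_eventually_affine hev]
      simp only [gab]
      rw [if_neg (not_le.2 hvb), if_pos h1.le]
    · have hev : ∀ᶠ u in 𝓝 t, Cab a b u v = 0 * u + v := by
        filter_upwards [isOpen_Ioi.eventually_mem (show t ∈ Ioi v from h1)] with u hu
        have hu' : v < u := hu
        rw [Cab, Eb, if_neg (by simp only [not_and]; intro _; exact not_le.2 hvb),
          min_eq_right hu'.le]
        ring
      rw [deriv_eq_of_eventually_affine hev]
      simp only [gab]
      rw [if_neg (not_le.2 hvb), if_neg (not_le.2 h1)]

lemma isSI_Cab (ha0 : 0 ≤ a) (ha1 : a ≤ 1) (hb0 : 0 < b) (hb1 : b ≤ 1) :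
    IsSI fun u v => Cab a b u v := by
  intro v hv
  refine ⟨gab a b v, gab_antitone ha0 ha1 hb0 hv.1, ?_⟩
  filter_upwards [self_mem_ae_restrict measurableSet_Icc,
    ae_restrict_of_ae (ae_ne_vol 0), ae_restrict_of_ae (ae_ne_vol 1),
    ae_restrict_of_ae (ae_ne_vol v), ae_restrict_of_ae (ae_ne_vol b)]
    with t htm ht0 ht1 htv htb
  exact deriv_Cab ha0 ha1 hb0 hb1 hv ⟨htm.1.lt_of_ne (Ne.symm ht0), htm.2.lt_of_ne ht1⟩ htv htb

lemma gab_meas (a b v : ℝ) : Measurable (gab a b v) := by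
  unfold gab
  by_cases hvb : v ≤ b
  · simp only [hvb, if_true]
    exact Measurable.ite (measurableSet_le measurable_id measurable_const) measurable_const
      (Measurable.ite (measurableSet_le measurable_id measurable_const) measurable_const
        measurable_const)
  · simp only [hvb, if_false]
    exact Measurable.ite (measurableSet_le measurable_id measurable_const) measurable_const
      measurable_const

lemma gab_sq_ii (ha0 : 0 ≤ a) (ha1 : a ≤ 1) (hb0 : 0 < b) {v : ℝ} (hv0 : 0 ≤ v)
    {c d : ℝ} (hcd : c ≤ d) :
    IntervalIntegrable (fun t => (gab a b v t) ^ 2) volume c d := by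
  apply ii_of_bounded ((gab_meas a b v).pow_const 2) hcd
    (M := (a + (1 - a) * (v / b)) ^ 2 + 1)
  apply ae_of_all
  intro t
  rw [abs_of_nonneg (sq_nonneg _)]
  have hq0 : 0 ≤ (1 - a) * (v / b) := mul_nonneg (by linarith) (div_nonneg hv0 hb0.le)
  unfold gab
  split_ifs <;> nlinarith [sq_nonneg (a + (1 - a) * (v / b)), hq0, ha0]

end Family

section FamilyIntegrals

variable {a b : ℝ}

lemma inner_Cab (ha0 : 0 ≤ a) (ha1 : a ≤ 1) (hb0 : 0 < b) (hb1 : b ≤ 1) {v : ℝ}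
    (hv : v ∈ Ioo (0:ℝ) 1) (hvb : v ≠ b) :
    (∫ t in (0:ℝ)..1, (d1 (fun u v => Cab a b u v) t v) ^ 2)
      = if v ≤ b then (a + (1 - a) * (v / b)) ^ 2 * v + ((1 - a) * (v / b)) ^ 2 * (b - v)
        else v := by
  have hvIcc : v ∈ Icc (0:ℝ) 1 := Ioo_subset_Icc_self hv
  have step1 : (∫ t in (0:ℝ)..1, (d1 (fun u v => Cab a b u v) t v) ^ 2)
      = ∫ t in (0:ℝ)..1, (gab a b v t) ^ 2 := by
    apply intervalIntegral.integral_congr_ae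
    filter_upwards [ae_ne_vol v, ae_ne_vol b, ae_ne_vol 1] with t htv htb ht1 htm
    rw [uIoc_of_le zero_le_one] at htm
    rw [deriv_Cab ha0 ha1 hb0 hb1 hvIcc ⟨htm.1, htm.2.lt_of_ne ht1⟩ htv htb]
  rw [step1]
  rcases le_or_gt v b with hvb' | hvb'
  · have hvb2 : v < b := lt_of_le_of_ne hvb' hvb
    rw [if_pos hvb']
    have i1 : ∫ t in (0:ℝ)..v, (gab a b v t) ^ 2 = (a + (1 - a) * (v / b)) ^ 2 * v := by
      have he : EqOn (fun t => (gab a b v t) ^ 2)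
          (fun _ => (a + (1 - a) * (v / b)) ^ 2) (uIcc (0:ℝ) v) := by
        intro t htm
        rw [uIcc_of_le hv.1.le] at htm
        simp only [gab]
        rw [if_pos hvb', if_pos htm.2]
      rw [intervalIntegral.integral_congr he, intervalIntegral.integral_const, smul_eq_mul]
      ring
    have i2 : ∫ t in v..b, (gab a b v t) ^ 2 = ((1 - a) * (v / b)) ^ 2 * (b - v) := by
      have he : ∀ᵐ t ∂(volume : Measure ℝ), t ∈ Ι v b →
          (gab a b v t) ^ 2 = ((1 - a) * (v / b)) ^ 2 := by
        apply ae_of_all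
        intro t htm
        rw [uIoc_of_le hvb2.le] at htm
        simp only [gab]
        rw [if_pos hvb', if_neg (not_le.2 htm.1), if_pos htm.2]
      rw [intervalIntegral.integral_congr_ae he, intervalIntegral.integral_const, smul_eq_mul]
      ring
    have i3 : ∫ t in b..(1:ℝ), (gab a b v t) ^ 2 = 0 := by
      have he : ∀ᵐ t ∂(volume : Measure ℝ), t ∈ Ι b 1 → (gab a b v t) ^ 2 = (0:ℝ) := by
        apply ae_of_all
        intro t htm
        rw [uIoc_of_le hb1] at htm
        simp only [gab]
        rw [if_pos hvb', if_neg (not_le.2 (lt_of_le_of_lt hvb' htm.1)),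
          if_neg (not_le.2 htm.1)]
        norm_num
      rw [intervalIntegral.integral_congr_ae he, intervalIntegral.integral_const, smul_eq_mul,
        mul_zero]
    rw [← intervalIntegral.integral_add_adjacent_intervals
      (gab_sq_ii ha0 ha1 hb0 hv.1.le hv.1.le) (gab_sq_ii ha0 ha1 hb0 hv.1.le hv.2.le),
      ← intervalIntegral.integral_add_adjacent_intervals
      (gab_sq_ii ha0 ha1 hb0 hv.1.le hvb2.le) (gab_sq_ii ha0 ha1 hb0 hv.1.le hb1),
      i1, i2, i3]
    ring
  · rw [if_neg (not_le.2 hvb')]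
    have i1 : ∫ t in (0:ℝ)..v, (gab a b v t) ^ 2 = v := by
      have he : EqOn (fun t => (gab a b v t) ^ 2) (fun _ => (1:ℝ)) (uIcc (0:ℝ) v) := by
        intro t htm
        rw [uIcc_of_le hv.1.le] at htm
        simp only [gab]
        rw [if_neg (not_le.2 hvb'), if_pos htm.2]
        norm_num
      rw [intervalIntegral.integral_congr he, intervalIntegral.integral_const, smul_eq_mul]
      ring
    have i2 : ∫ t in v..(1:ℝ), (gab a b v t) ^ 2 = 0 := by
      have he : ∀ᵐ t ∂(volume : Measure ℝ), t ∈ Ι v 1 → (gab a b v t) ^ 2 = (0:ℝ) := by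
        apply ae_of_all
        intro t htm
        rw [uIoc_of_le hv.2.le] at htm
        simp only [gab]
        rw [if_neg (not_le.2 hvb'), if_neg (not_le.2 htm.1)]
        norm_num
      rw [intervalIntegral.integral_congr_ae he, intervalIntegral.integral_const, smul_eq_mul,
        mul_zero]
    rw [← intervalIntegral.integral_add_adjacent_intervals
      (gab_sq_ii ha0 ha1 hb0 (by linarith [hv.1] : (0:ℝ) ≤ v) hv.1.le)
      (gab_sq_ii ha0 ha1 hb0 (by linarith [hv.1] : (0:ℝ) ≤ v) hv.2.le),
      i1, i2, add_zero]

lemma psi_Cab (ha0 : 0 ≤ a) (ha1 : a ≤ 1) (hb0 : 0 < b) (hb1 : b ≤ 1) :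
    psi (fun u v => Cab a b u v) = 1 - b ^ 2 * (1 - a) := by
  have e1 : EqOn (fun v => Cab a b v v) (fun v => a * v + ((1 - a) / b) * v ^ 2)
      (Icc (0:ℝ) b) := by
    intro v hvm
    show Cab a b v v = a * v + ((1 - a) / b) * v ^ 2
    rw [Cab, Eb, if_pos ⟨hvm.2, hvm.2⟩, min_self]
    ring
  have e2 : EqOn (fun v => Cab a b v v) (fun v => v) (Icc b (1:ℝ)) := by
    intro v hvm
    show Cab a b v v = v
    rw [Cab, Eb]
    by_cases h : v ≤ b
    · have hvb : v = b := le_antisymm h hvm.1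
      rw [if_pos ⟨h, h⟩, min_self, hvb]
      have hbb : b * b / b = b := by field_simp
      rw [hbb]
      ring
    · rw [if_neg (fun hh => h hh.1), min_self]
      ring
  have hca : Continuous fun v : ℝ => a * v := continuous_const.mul continuous_id
  have hcb : Continuous fun v : ℝ => ((1 - a) / b) * v ^ 2 :=
    continuous_const.mul (continuous_pow 2)
  have hc1 : Continuous fun v : ℝ => a * v + ((1 - a) / b) * v ^ 2 := hca.add hcb
  have ii1 : IntervalIntegrable (fun v => Cab a b v v) volume 0 b := by
    apply ContinuousOn.intervalIntegrable
    rw [uIcc_of_le hb0.le]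
    exact hc1.continuousOn.congr e1
  have ii2 : IntervalIntegrable (fun v => Cab a b v v) volume b 1 := by
    apply ContinuousOn.intervalIntegrable
    rw [uIcc_of_le hb1]
    exact continuous_id.continuousOn.congr e2
  have v1 : ∫ v in (0:ℝ)..b, Cab a b v v = a * (b ^ 2 / 2) + ((1 - a) / b) * (b ^ 3 / 3) := by
    have e1' : EqOn (fun v => Cab a b v v) (fun v => a * v + ((1 - a) / b) * v ^ 2)
        (uIcc (0:ℝ) b) := by
      rw [uIcc_of_le hb0.le]
      exact e1
    rw [intervalIntegral.integral_congr e1',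
      intervalIntegral.integral_add (hca.intervalIntegrable _ _) (hcb.intervalIntegrable _ _),
      intervalIntegral.integral_const_mul, intervalIntegral.integral_const_mul,
      integral_id, integral_pow]
    norm_num
  have v2 : ∫ v in b..(1:ℝ), Cab a b v v = (1 - b ^ 2) / 2 := by
    have e2' : EqOn (fun v => Cab a b v v) (fun v => v) (uIcc b (1:ℝ)) := by
      rw [uIcc_of_le hb1]
      exact e2
    rw [intervalIntegral.integral_congr e2', integral_id]
    norm_num
  have : psi (fun u v => Cab a b u v)
      = 6 * ((∫ v in (0:ℝ)..b, Cab a b v v) + ∫ v in b..(1:ℝ), Cab a b v v) - 2 := by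
    rw [psi, intervalIntegral.integral_add_adjacent_intervals ii1 ii2]
  rw [this, v1, v2]
  field_simp
  ring

lemma xi_Cab (ha0 : 0 ≤ a) (ha1 : a ≤ 1) (hb0 : 0 < b) (hb1 : b ≤ 1) :
    xi (fun u v => Cab a b u v) = 1 - b ^ 2 * (1 - a ^ 2) := by
  set F := fun v : ℝ => if v ≤ b then (a + (1 - a) * (v / b)) ^ 2 * v
      + ((1 - a) * (v / b)) ^ 2 * (b - v) else v with hF
  have step1 : (∫ v in (0:ℝ)..1, ∫ t in (0:ℝ)..1, (d1 (fun u v => Cab a b u v) t v) ^ 2)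
      = ∫ v in (0:ℝ)..1, F v := by
    apply intervalIntegral.integral_congr_ae
    filter_upwards [ae_ne_vol b, ae_ne_vol 1] with v hvb hv1 hvm
    rw [uIoc_of_le zero_le_one] at hvm
    rw [inner_Cab ha0 ha1 hb0 hb1 ⟨hvm.1, hvm.2.lt_of_ne hv1⟩ hvb, hF]
  have e1 : EqOn F (fun v => a ^ 2 * v + ((1 - a ^ 2) / b) * v ^ 2) (Icc (0:ℝ) b) := by
    intro v hvm
    simp only [hF]
    rw [if_pos hvm.2]
    have hq : v / b * b = v := div_mul_cancel₀ v (ne_of_gt hb0)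
    field_simp
    ring
  have e2 : EqOn F (fun v => v) (Icc b (1:ℝ)) := by
    intro v hvm
    simp only [hF]
    by_cases h : v ≤ b
    · have hvb : v = b := le_antisymm h hvm.1
      rw [if_pos h, hvb, div_self (ne_of_gt hb0)]
      ring
    · rw [if_neg h]
  have hca : Continuous fun v : ℝ => a ^ 2 * v := continuous_const.mul continuous_id
  have hcb : Continuous fun v : ℝ => ((1 - a ^ 2) / b) * v ^ 2 :=
    continuous_const.mul (continuous_pow 2)
  have hc1 : Continuous fun v : ℝ => a ^ 2 * v + ((1 - a ^ 2) / b) * v ^ 2 := hca.add hcb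
  have ii1 : IntervalIntegrable F volume 0 b := by
    apply ContinuousOn.intervalIntegrable
    rw [uIcc_of_le hb0.le]
    exact hc1.continuousOn.congr e1
  have ii2 : IntervalIntegrable F volume b 1 := by
    apply ContinuousOn.intervalIntegrable
    rw [uIcc_of_le hb1]
    exact continuous_id.continuousOn.congr e2
  have v1 : ∫ v in (0:ℝ)..b, F v = a ^ 2 * (b ^ 2 / 2) + ((1 - a ^ 2) / b) * (b ^ 3 / 3) := by
    have e1' : EqOn F (fun v => a ^ 2 * v + ((1 - a ^ 2) / b) * v ^ 2) (uIcc (0:ℝ) b) := by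
      rw [uIcc_of_le hb0.le]
      exact e1
    rw [intervalIntegral.integral_congr e1',
      intervalIntegral.integral_add (hca.intervalIntegrable _ _) (hcb.intervalIntegrable _ _),
      intervalIntegral.integral_const_mul, intervalIntegral.integral_const_mul,
      integral_id, integral_pow]
    norm_num
  have v2 : ∫ v in b..(1:ℝ), F v = (1 - b ^ 2) / 2 := by
    have e2' : EqOn F (fun v => v) (uIcc b (1:ℝ)) := by
      rw [uIcc_of_le hb1]
      exact e2
    rw [intervalIntegral.integral_congr e2', integral_id]
    norm_num
  have : xi (fun u v => Cab a b u v)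
      = 6 * ((∫ v in (0:ℝ)..b, F v) + ∫ v in b..(1:ℝ), F v) - 2 := by
    rw [xi, step1, intervalIntegral.integral_add_adjacent_intervals ii1 ii2]
  rw [this, v1, v2]
  field_simp
  ring

end FamilyIntegrals

/-- Backward direction. -/
lemma backward {x y : ℝ} (hx : x ∈ Icc (0:ℝ) 1) (hy : y ∈ Icc (0:ℝ) 1)
    (hxy : x ≤ y) (hys : y ≤ Real.sqrt x) :
    ∃ C : ℝ → ℝ → ℝ, IsCopula C ∧ IsSI C ∧ xi C = x ∧ psi C = y := by
  have hsq : y ^ 2 ≤ x := by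
    nlinarith [Real.sq_sqrt hx.1, hy.1, hys, Real.sqrt_nonneg x]
  by_cases hy1 : y = 1
  · have hx1 : x = 1 := by nlinarith
    refine ⟨fun u v => Cab 1 1 u v, isCopula_Cab zero_le_one le_rfl one_pos le_rfl,
      isSI_Cab zero_le_one le_rfl one_pos le_rfl, ?_, ?_⟩
    · rw [xi_Cab zero_le_one le_rfl one_pos le_rfl, hx1]
      norm_num
    · rw [psi_Cab zero_le_one le_rfl one_pos le_rfl, hy1]
      norm_num
  · have hylt : y < 1 := lt_of_le_of_ne hy.2 hy1
    have hd : 0 < 1 + x - 2 * y := by nlinarith [sq_nonneg (1 - y)]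
    set s := Real.sqrt (1 + x - 2 * y) with hs_def
    have hs : s ^ 2 = 1 + x - 2 * y := Real.sq_sqrt hd.le
    have hs0 : 0 < s := Real.sqrt_pos.2 hd
    set A := (y - x) / (1 - y) with hA_def
    set B := (1 - y) / s with hB_def
    have hA0 : 0 ≤ A := div_nonneg (by linarith) (by linarith)
    have hA1 : A ≤ 1 := by
      rw [div_le_one (by linarith : (0:ℝ) < 1 - y)]
      linarith
    have hB0 : 0 < B := div_pos (by linarith) hs0
    have hB1 : B ≤ 1 := by
      rw [div_le_one hs0]
      nlinarith [hs, hs0, hsq]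
    have hBsq : B ^ 2 = (1 - y) ^ 2 / (1 + x - 2 * y) := by
      rw [hB_def, div_pow, hs]
    refine ⟨fun u v => Cab A B u v, isCopula_Cab hA0 hA1 hB0 hB1,
      isSI_Cab hA0 hA1 hB0 hB1, ?_, ?_⟩
    · rw [xi_Cab hA0 hA1 hB0 hB1, hBsq, hA_def]
      have h1 : (1:ℝ) - y ≠ 0 := by linarith
      have h2 : (1:ℝ) + x - 2 * y ≠ 0 := ne_of_gt hd
      have h3 : (1:ℝ) + x - y * 2 ≠ 0 := by rw [mul_comm]; exact h2
      field_simp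
      ring
    · rw [psi_Cab hA0 hA1 hB0 hB1, hBsq, hA_def]
      have h1 : (1:ℝ) - y ≠ 0 := by linarith
      have h2 : (1:ℝ) + x - 2 * y ≠ 0 := ne_of_gt hd
      have h3 : (1:ℝ) + x - y * 2 ≠ 0 := by rw [mul_comm]; exact h2
      field_simp
      ring

/-- The attainable `(ξ,ψ)`-region over stochastically increasing copulas is
exactly `{(x,y) ∈ [0,1]² : x ≤ y ≤ √x}`. -/
theorem si_region :
    {p : ℝ × ℝ | ∃ C : ℝ → ℝ → ℝ, IsCopula C ∧ IsSI C ∧ p = (xi C, psi C)} =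
      {p : ℝ × ℝ | p.1 ∈ Icc (0:ℝ) 1 ∧ p.2 ∈ Icc (0:ℝ) 1 ∧
        p.1 ≤ p.2 ∧ p.2 ≤ Real.sqrt p.1} := by
  ext ⟨x, y⟩
  simp only [mem_setOf_eq]
  constructor
  · rintro ⟨C, hC, hSI, hp⟩
    rw [Prod.ext_iff] at hp
    obtain ⟨hp1, hp2⟩ := hp
    simp only at hp1 hp2
    obtain ⟨h1, h2, h3, h4⟩ := forward hC hSI
    rw [hp1, hp2]
    exact ⟨h1, h2, h3, h4⟩
  · rintro ⟨hx, hy, hxy, hys⟩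
    obtain ⟨C, hC, hSI, hxi, hpsi⟩ := backward hx hy hxy hys
    exact ⟨C, hC, hSI, by rw [hxi, hpsi]⟩
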